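/- arXiv:2312.01986 — 2 statements merged into one kernel-verified Lean document; each statement's English description precedes it below -/
import Mathlib

section
/- Let (X, μ) be a measure space with 0 < μ(X) < ∞. Let (f_k)_{k∈ℕ} be a sequence of non-negative μ-measurable functions on X, and let (a_k)_{k∈ℕ}, (φ_k)_{k∈ℕ} be sequences of real numbers with 0 ≤ a_k ≤ φ_k for all k. Set Φ(N) := ∑_{k=1}^N φ_k and assume Φ(N) → ∞ as N → ∞. Suppose there is a constant K such that for all integers 1 ≤ m < n one has ∫_X ( ∑_{m ≤ k < n} (f_k(x) − a_k) )² dμ(x) ≤ K·∑_{m ≤ k < n} φ_k. Then for every δ > 0 and for μ-almost every x ∈ X, ∑_{k=1}^N f_k(x) = ∑_{k=1}^N a_k + O( Φ(N)^{1/2}·(log(Φ(N)+2))^{3/2+δ} + max_{1≤k≤N} a_k ) as N → ∞. -/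
open MeasureTheory

open Finset Filter
open scoped ENNReal NNReal
set_option maxHeartbeats 1000000

namespace HarmanAux

noncomputable def PS (φ : ℕ → ℝ) (N : ℕ) : ℝ := ∑ k ∈ Finset.Icc 1 N, φ k

lemma PS_zero (φ : ℕ → ℝ) : PS φ 0 = 0 := by simp [PS]

lemma PS_eq_Ico (φ : ℕ → ℝ) (N : ℕ) : PS φ N = ∑ k ∈ Finset.Ico 1 (N + 1), φ k := by
  rw [PS, Finset.Ico_add_one_right_eq_Icc]

section Basic
variable {φ : ℕ → ℝ}

lemma PS_mono (hφ0 : ∀ k, 0 ≤ φ k) : Monotone (PS φ) := by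
  intro M N h
  exact Finset.sum_le_sum_of_subset_of_nonneg (Finset.Icc_subset_Icc_right h)
    (fun k _ _ => hφ0 k)

lemma PS_nonneg (hφ0 : ∀ k, 0 ≤ φ k) (N : ℕ) : 0 ≤ PS φ N :=
  PS_zero φ ▸ PS_mono hφ0 (Nat.zero_le N)

lemma sum_Ico_phi (hφ0 : ∀ k, 0 ≤ φ k) {m n : ℕ} (hm : 1 ≤ m) (hmn : m ≤ n) :
    ∑ k ∈ Finset.Ico m n, φ k = PS φ (n - 1) - PS φ (m - 1) := by
  have h1 : PS φ (n-1) = ∑ k ∈ Finset.Ico 1 n, φ k := by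
    rw [PS_eq_Ico]; congr 1
  have h2 : PS φ (m-1) = ∑ k ∈ Finset.Ico 1 m, φ k := by
    rw [PS_eq_Ico]; congr 1
  have := Finset.sum_Ico_consecutive φ hm hmn
  rw [h1, h2]; linarith

noncomputable def mIdx (φ : ℕ → ℝ) (i : ℕ) : ℕ := sInf {N | 1 ≤ N ∧ (i : ℝ) ≤ PS φ N}

variable (htend : Filter.Tendsto (PS φ) Filter.atTop Filter.atTop)

include htend in
lemma mIdx_set_nonempty (i : ℕ) : {N | 1 ≤ N ∧ (i : ℝ) ≤ PS φ N}.Nonempty := by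
  obtain ⟨N, hN⟩ := (htend.eventually_ge_atTop (i : ℝ)).exists_forall_of_atTop
  exact ⟨max N 1, le_max_right _ _, hN _ (le_max_left _ _)⟩

include htend in
lemma mIdx_one_le (i : ℕ) : 1 ≤ mIdx φ i := (Nat.sInf_mem (mIdx_set_nonempty htend i)).1

include htend in
lemma mIdx_spec (i : ℕ) : (i : ℝ) ≤ PS φ (mIdx φ i) := (Nat.sInf_mem (mIdx_set_nonempty htend i)).2

lemma mIdx_le {i N : ℕ} (hN : 1 ≤ N) (h : (i : ℝ) ≤ PS φ N) : mIdx φ i ≤ N :=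
  Nat.sInf_le ⟨hN, h⟩

include htend in
lemma mIdx_pre (i : ℕ) : PS φ (mIdx φ i - 1) ≤ (i : ℝ) := by
  rcases Nat.eq_or_lt_of_le (mIdx_one_le htend i) with h | h
  · rw [← h]; simpa [PS_zero] using (Nat.cast_nonneg i : (0:ℝ) ≤ i)
  · by_contra hc
    push_neg at hc
    have : mIdx φ i ≤ mIdx φ i - 1 := mIdx_le (by omega) hc.le
    omega

include htend in
lemma mIdx_mono {i i' : ℕ} (h : i ≤ i') : mIdx φ i ≤ mIdx φ i' :=
  mIdx_le (mIdx_one_le htend i') (le_trans (by exact_mod_cast h) (mIdx_spec htend i'))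

include htend in
lemma mIdx_zero (hφ0 : ∀ k, 0 ≤ φ k) : mIdx φ 0 = 1 := by
  have h1 : mIdx φ 0 ≤ 1 := mIdx_le le_rfl (by simpa using PS_nonneg hφ0 1)
  have h2 := mIdx_one_le htend 0
  omega
end Basic



section ChainSec
variable {X : Type*} (f : ℕ → X → ℝ) (a φ : ℕ → ℝ)

noncomputable def Sd (i : ℕ) (x : X) : ℝ := ∑ k ∈ Finset.Ico 1 (mIdx φ i), (f k x - a k)

noncomputable def Tb (lo hi : ℕ) (x : X) : ℝ :=
  ∑ k ∈ Finset.Ico (mIdx φ lo) (mIdx φ hi), (f k x - a k)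

noncomputable def LV (j t r : ℕ) (x : X) : ℝ :=
  ∑ s ∈ Finset.Ico (2^(j-t) * r) (2^(j-t) * (r+1)), (Tb f a φ (2^t * s) (2^t * (s+1)) x) ^ 2

noncomputable def Dj (j : ℕ) (x : X) : ℝ := ∑ t ∈ Finset.range j, LV f a φ j t 0 x

variable {φ} (h1 : ∀ i, 1 ≤ mIdx φ i) (hmono : ∀ ⦃i i' : ℕ⦄, i ≤ i' → mIdx φ i ≤ mIdx φ i')

section
variable {f a}
include h1 hmono in
lemma Tb_eq {lo hi : ℕ} (h : lo ≤ hi) (x : X) :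
    Sd f a φ hi x - Sd f a φ lo x = Tb f a φ lo hi x := by
  rw [Sd, Sd, Tb, ← Finset.sum_Ico_consecutive (fun k => f k x - a k) (h1 lo) (hmono h)]
  ring

lemma LV_nonneg (j t r : ℕ) (x : X) : 0 ≤ LV f a φ j t r x :=
  Finset.sum_nonneg fun s _ => sq_nonneg _

lemma Dj_nonneg (j : ℕ) (x : X) : 0 ≤ Dj f a φ j x :=
  Finset.sum_nonneg fun t _ => LV_nonneg _ _ _ _

lemma LV_left {j t : ℕ} (ht : t ≤ j) (r : ℕ) (x : X) :
    LV f a φ j t (2*r) x ≤ LV f a φ (j+1) t r x := by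
  apply Finset.sum_le_sum_of_subset_of_nonneg
  · apply Finset.Ico_subset_Ico
    · apply le_of_eq
      have : j + 1 - t = (j - t) + 1 := by omega
      rw [this]; ring
    · have : j + 1 - t = (j - t) + 1 := by omega
      rw [this]; ring_nf; nlinarith [pow_pos (by norm_num : (0:ℕ) < 2) (j - t)]
  · intro s _ _; exact sq_nonneg _

lemma LV_right {j t : ℕ} (ht : t ≤ j) (r : ℕ) (x : X) :
    LV f a φ j t (2*r+1) x ≤ LV f a φ (j+1) t r x := by
  apply Finset.sum_le_sum_of_subset_of_nonneg
  · apply Finset.Ico_subset_Ico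
    · have : j + 1 - t = (j - t) + 1 := by omega
      rw [this]; ring_nf; nlinarith [Nat.one_le_two_pow (n := j - t)]
    · apply le_of_eq
      have : j + 1 - t = (j - t) + 1 := by omega
      rw [this]; ring
  · intro s _ _; exact sq_nonneg _

include h1 hmono in
lemma chain (x : X) : ∀ (j r i : ℕ), i < 2^j →
    |Sd f a φ (2^j * r + i) x - Sd f a φ (2^j * r) x|
      ≤ ∑ t ∈ Finset.range j, Real.sqrt (LV f a φ j t r x) := by
  intro j
  induction j with
  | zero =>
    intro r i hi
    interval_cases i
    simp
  | succ j ih =>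
    intro r i hi
    -- bound for a level-j block s inside [2r, 2r+2)
    have hblk : ∀ s : ℕ, 2*r ≤ s → s < 2*r + 2 →
        |Tb f a φ (2^j * s) (2^j * (s+1)) x| ≤ Real.sqrt (LV f a φ (j+1) j r x) := by
      intro s hs1 hs2
      rw [← Real.sqrt_sq_eq_abs]
      apply Real.sqrt_le_sqrt
      have hLV : LV f a φ (j+1) j r x
          = ∑ s ∈ Finset.Ico (2 * r) (2 * (r+1)), (Tb f a φ (2^j * s) (2^j * (s+1)) x) ^ 2 := by
        have e : j + 1 - j = 1 := by omega
        rw [LV, e]; norm_num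
      rw [hLV]
      exact Finset.single_le_sum (f := fun s => (Tb f a φ (2^j * s) (2^j * (s+1)) x)^2)
        (fun s _ => sq_nonneg _) (by rw [Finset.mem_Ico]; omega)
    have sqrt_nonneg' : ∀ t ∈ Finset.range (j+1), (0:ℝ) ≤ Real.sqrt (LV f a φ (j+1) t r x) :=
      fun t _ => Real.sqrt_nonneg _
    rcases lt_trichotomy i (2^j) with h | h | h
    · -- left half
      have e1 : 2^(j+1) * r = 2^j * (2*r) := by rw [pow_succ]; ring
      have := ih (2*r) i h
      rw [e1]
      calc |Sd f a φ (2^j * (2*r) + i) x - Sd f a φ (2^j * (2*r)) x|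
          ≤ ∑ t ∈ Finset.range j, Real.sqrt (LV f a φ j t (2*r) x) := this
        _ ≤ ∑ t ∈ Finset.range j, Real.sqrt (LV f a φ (j+1) t r x) :=
            Finset.sum_le_sum (fun t ht =>
              Real.sqrt_le_sqrt (LV_left (le_of_lt (Finset.mem_range.mp ht)) r x))
        _ ≤ ∑ t ∈ Finset.range (j+1), Real.sqrt (LV f a φ (j+1) t r x) :=
            Finset.sum_le_sum_of_subset_of_nonneg
              (Finset.range_subset_range.mpr (Nat.le_succ j)) (fun t _ _ => Real.sqrt_nonneg _)
    · -- i = 2^j exactly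
      subst h
      have e1 : 2^(j+1) * r = 2^j * (2*r) := by rw [pow_succ]; ring
      have e2 : 2^(j+1) * r + 2^j = 2^j * (2*r+1) := by rw [pow_succ]; ring
      have heq := Tb_eq (f := f) (a := a) h1 hmono (show 2^j*(2*r) ≤ 2^j*(2*r+1) from
        Nat.mul_le_mul_left _ (by omega)) x
      calc |Sd f a φ (2^(j+1) * r + 2^j) x - Sd f a φ (2^(j+1) * r) x|
          = |Tb f a φ (2^j * (2*r)) (2^j * (2*r+1)) x| := by rw [e2, e1, heq]
        _ ≤ Real.sqrt (LV f a φ (j+1) j r x) := hblk (2*r) le_rfl (by omega)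
        _ ≤ ∑ t ∈ Finset.range (j+1), Real.sqrt (LV f a φ (j+1) t r x) :=
            Finset.single_le_sum sqrt_nonneg' (Finset.mem_range.mpr (Nat.lt_succ_self j))
    · -- right half
      have hi' : i - 2^j < 2^j := by
        have h2 : 2^(j+1) = 2^j * 2 := by rw [pow_succ]
        omega
      have e1 : 2^(j+1) * r = 2^j * (2*r) := by rw [pow_succ]; ring
      have e2 : 2^(j+1) * r + i = 2^j * (2*r+1) + (i - 2^j) := by
        have h2 : 2^(j+1) = 2^j * 2 := by rw [pow_succ]
        have h3 : 2^j * (2*r+1) = 2^j * (2*r) + 2^j := by ring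
        omega
      have key := ih (2*r+1) (i - 2^j) hi'
      have heq := Tb_eq (f := f) (a := a) h1 hmono (show 2^j*(2*r) ≤ 2^j*(2*r+1) from
        Nat.mul_le_mul_left _ (by omega)) x
      have key2 : ∀ t ∈ Finset.range j, Real.sqrt (LV f a φ j t (2*r+1) x)
          ≤ Real.sqrt (LV f a φ (j+1) t r x) := fun t ht =>
        Real.sqrt_le_sqrt (LV_right (le_of_lt (Finset.mem_range.mp ht)) r x)
      calc |Sd f a φ (2^(j+1) * r + i) x - Sd f a φ (2^(j+1) * r) x|
          ≤ |Sd f a φ (2^j * (2*r+1) + (i - 2^j)) x - Sd f a φ (2^j * (2*r+1)) x|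
            + |Sd f a φ (2^j * (2*r+1)) x - Sd f a φ (2^j * (2*r)) x| := by
            rw [e2, e1]; exact abs_sub_le _ _ _
        _ ≤ (∑ t ∈ Finset.range j, Real.sqrt (LV f a φ j t (2*r+1) x))
            + Real.sqrt (LV f a φ (j+1) j r x) := by
            refine add_le_add key ?_
            rw [heq]
            exact hblk (2*r) le_rfl (by omega)
        _ ≤ (∑ t ∈ Finset.range j, Real.sqrt (LV f a φ (j+1) t r x))
            + Real.sqrt (LV f a φ (j+1) j r x) :=
            add_le_add (Finset.sum_le_sum key2) le_rfl
        _ = ∑ t ∈ Finset.range (j+1), Real.sqrt (LV f a φ (j+1) t r x) :=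
            (Finset.sum_range_succ _ j).symm

include h1 hmono in
lemma chain0 (hzero : mIdx φ 0 = 1) (x : X) {j i : ℕ} (hij : i < 2^j) :
    |Sd f a φ i x| ≤ Real.sqrt ((j : ℝ) * Dj f a φ j x) := by
  have h := chain (f := f) (a := a) h1 hmono x j 0 i (by simpa using hij)
  simp only [Nat.mul_zero, Nat.zero_add] at h
  have hSd0 : Sd f a φ 0 x = 0 := by rw [Sd, hzero]; simp
  rw [hSd0, sub_zero] at h
  refine h.trans ?_
  have hnn : 0 ≤ ∑ t ∈ Finset.range j, Real.sqrt (LV f a φ j t 0 x) :=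
    Finset.sum_nonneg fun t _ => Real.sqrt_nonneg _
  rw [← Real.sqrt_sq hnn]
  apply Real.sqrt_le_sqrt
  calc (∑ t ∈ Finset.range j, Real.sqrt (LV f a φ j t 0 x))^2
      ≤ (Finset.range j).card * ∑ t ∈ Finset.range j, (Real.sqrt (LV f a φ j t 0 x))^2 :=
        sq_sum_le_card_mul_sum_sq
    _ = (j : ℝ) * Dj f a φ j x := by
        rw [Finset.card_range, Dj]
        congr 1
        exact Finset.sum_congr rfl fun t _ => Real.sq_sqrt (LV_nonneg _ _ _ _)

end
end ChainSec

section Integrals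

variable {X : Type*} [MeasurableSpace X] {μ : Measure X}
variable {f : ℕ → X → ℝ} {a φ : ℕ → ℝ}

lemma meas_Tb (hmeas : ∀ k, Measurable (f k)) (lo hi : ℕ) :
    Measurable (Tb f a φ lo hi) :=
  Finset.measurable_sum _ fun k _ => (hmeas k).sub measurable_const

variable (htend : Filter.Tendsto (PS φ) Filter.atTop Filter.atTop)
  (hφ0 : ∀ k, 0 ≤ φ k) {K : ℝ}
  (hvar : ∀ m n : ℕ, 1 ≤ m → m < n →
      ∫⁻ x, ENNReal.ofReal ((∑ k ∈ Finset.Ico m n, (f k x - a k)) ^ 2) ∂μ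
        ≤ ENNReal.ofReal (K * ∑ k ∈ Finset.Ico m n, φ k))

include htend hφ0 hvar in
lemma lint_Tb {lo hi : ℕ} (hlohi : lo ≤ hi) :
    ∫⁻ x, ENNReal.ofReal ((Tb f a φ lo hi x)^2) ∂μ
      ≤ ENNReal.ofReal (max K 0 * (PS φ (mIdx φ hi - 1) - PS φ (mIdx φ lo - 1))) := by
  have hdiff : 0 ≤ PS φ (mIdx φ hi - 1) - PS φ (mIdx φ lo - 1) :=
    sub_nonneg.2 (PS_mono hφ0 (Nat.sub_le_sub_right (mIdx_mono htend hlohi) 1))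
  rcases eq_or_lt_of_le (mIdx_mono htend hlohi) with h | h
  · have hz : ∀ x : X, ENNReal.ofReal ((Tb f a φ lo hi x)^2) = 0 := by
      intro x
      rw [Tb, ← h, Finset.Ico_self, Finset.sum_empty]
      simp
    simp only [hz, lintegral_const, zero_mul]
    exact zero_le
  · have hbound := hvar (mIdx φ lo) (mIdx φ hi) (mIdx_one_le htend lo) h
    have hsum : ∑ k ∈ Finset.Ico (mIdx φ lo) (mIdx φ hi), φ k
        = PS φ (mIdx φ hi - 1) - PS φ (mIdx φ lo - 1) :=
      sum_Ico_phi hφ0 (mIdx_one_le htend lo) h.le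
    refine hbound.trans (ENNReal.ofReal_le_ofReal ?_)
    rw [hsum]
    exact mul_le_mul_of_nonneg_right (le_max_left _ _) hdiff

include htend hφ0 hvar in
lemma lint_LV (hmeas : ∀ k, Measurable (f k)) {j t : ℕ} (ht : t ≤ j) :
    ∫⁻ x, ENNReal.ofReal (LV f a φ j t 0 x) ∂μ ≤ ENNReal.ofReal (max K 0 * 2^j) := by
  have hK' : (0:ℝ) ≤ max K 0 := le_max_right _ _
  have e : ∀ x : X, ENNReal.ofReal (LV f a φ j t 0 x)
      = ∑ s ∈ Finset.range (2^(j-t)),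
          ENNReal.ofReal ((Tb f a φ (2^t*s) (2^t*(s+1)) x)^2) := by
    intro x
    rw [LV, Nat.mul_zero, Nat.mul_one, ← Finset.range_eq_Ico,
      ENNReal.ofReal_sum_of_nonneg (fun s _ => sq_nonneg _)]
  have hmono' : ∀ s : ℕ, 0 ≤ max K 0 *
      (PS φ (mIdx φ (2^t*(s+1)) - 1) - PS φ (mIdx φ (2^t*s) - 1)) := fun s =>
    mul_nonneg hK' (sub_nonneg.2 (PS_mono hφ0 (Nat.sub_le_sub_right
      (mIdx_mono htend (Nat.mul_le_mul_left _ (Nat.le_succ s))) 1)))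
  calc ∫⁻ x, ENNReal.ofReal (LV f a φ j t 0 x) ∂μ
      = ∑ s ∈ Finset.range (2^(j-t)),
          ∫⁻ x, ENNReal.ofReal ((Tb f a φ (2^t*s) (2^t*(s+1)) x)^2) ∂μ := by
        simp_rw [e]
        exact lintegral_finset_sum _ fun s _ =>
          ((meas_Tb hmeas _ _).pow_const 2).ennreal_ofReal
    _ ≤ ∑ s ∈ Finset.range (2^(j-t)), ENNReal.ofReal (max K 0 *
          (PS φ (mIdx φ (2^t*(s+1)) - 1) - PS φ (mIdx φ (2^t*s) - 1))) :=
        Finset.sum_le_sum fun s _ =>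
          lint_Tb htend hφ0 hvar (Nat.mul_le_mul_left _ (Nat.le_succ s))
    _ = ENNReal.ofReal (∑ s ∈ Finset.range (2^(j-t)), max K 0 *
          (PS φ (mIdx φ (2^t*(s+1)) - 1) - PS φ (mIdx φ (2^t*s) - 1))) :=
        (ENNReal.ofReal_sum_of_nonneg fun s _ => hmono' s).symm
    _ = ENNReal.ofReal (max K 0 *
          (PS φ (mIdx φ (2^t*(2^(j-t))) - 1) - PS φ (mIdx φ (2^t*0) - 1))) := by
        rw [← Finset.mul_sum,
          Finset.sum_range_sub (fun s => PS φ (mIdx φ (2^t*s) - 1))]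
    _ ≤ ENNReal.ofReal (max K 0 * 2^j) := by
        apply ENNReal.ofReal_le_ofReal
        apply mul_le_mul_of_nonneg_left ?_ hK'
        have e2 : 2^t * 2^(j-t) = 2^j := by
          rw [← pow_add]
          congr 1
          omega
        have h1' := mIdx_pre htend (2^j)
        have h2' : PS φ (mIdx φ (2^t*0) - 1) = 0 := by
          rw [Nat.mul_zero, mIdx_zero htend hφ0]
          simp [PS_zero]
        rw [e2, h2', sub_zero]
        exact_mod_cast h1'

lemma meas_Dj (hmeas : ∀ k, Measurable (f k)) (j : ℕ) :
    Measurable (fun x => ENNReal.ofReal (Dj f a φ j x)) := by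
  apply Measurable.ennreal_ofReal
  apply Finset.measurable_sum
  intro t _
  exact Finset.measurable_sum _ fun s _ => (meas_Tb hmeas _ _).pow_const 2

include htend hφ0 hvar in
lemma lint_Dj (hmeas : ∀ k, Measurable (f k)) (j : ℕ) :
    ∫⁻ x, ENNReal.ofReal (Dj f a φ j x) ∂μ
      ≤ ENNReal.ofReal (max K 0 * j * 2^j) := by
  have e : ∀ x : X, ENNReal.ofReal (Dj f a φ j x)
      = ∑ t ∈ Finset.range j, ENNReal.ofReal (LV f a φ j t 0 x) := fun x =>
    ENNReal.ofReal_sum_of_nonneg fun t _ => LV_nonneg _ _ _ _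
  have hmeasLV : ∀ t : ℕ, Measurable (fun x => ENNReal.ofReal (LV f a φ j t 0 x)) := by
    intro t
    apply Measurable.ennreal_ofReal
    exact Finset.measurable_sum _ fun s _ => (meas_Tb hmeas _ _).pow_const 2
  calc ∫⁻ x, ENNReal.ofReal (Dj f a φ j x) ∂μ
      = ∑ t ∈ Finset.range j, ∫⁻ x, ENNReal.ofReal (LV f a φ j t 0 x) ∂μ := by
        simp_rw [e]
        exact lintegral_finset_sum _ fun t _ => hmeasLV t
    _ ≤ ∑ t ∈ Finset.range j, ENNReal.ofReal (max K 0 * 2^j) :=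
        Finset.sum_le_sum fun t ht =>
          lint_LV htend hφ0 hvar hmeas (le_of_lt (Finset.mem_range.mp ht))
    _ = (j : ℝ≥0∞) * ENNReal.ofReal (max K 0 * 2^j) := by
        rw [Finset.sum_const, Finset.card_range, nsmul_eq_mul]
    _ = ENNReal.ofReal (max K 0 * j * 2^j) := by
        rw [← ENNReal.ofReal_natCast j, ← ENNReal.ofReal_mul (Nat.cast_nonneg j)]
        ring_nf

end Integrals
end HarmanAux

open HarmanAux in
/-- Harman's mean–variance lemma (Lemma 1.5 in Harman's book). -/
theorem harman_mean_variance {X : Type*} [MeasurableSpace X] (μ : Measure X)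
    (hpos : 0 < μ Set.univ) (hfin : μ Set.univ < ⊤)
    (f : ℕ → X → ℝ) (hmeas : ∀ k, Measurable (f k)) (hnonneg : ∀ k x, 0 ≤ f k x)
    (a φ : ℕ → ℝ) (ha0 : ∀ k, 0 ≤ a k) (haφ : ∀ k, a k ≤ φ k)
    (hΦ : Filter.Tendsto (fun N => ∑ k ∈ Finset.Icc 1 N, φ k)
      Filter.atTop Filter.atTop)
    (K : ℝ)
    (hvar : ∀ m n : ℕ, 1 ≤ m → m < n →
      ∫⁻ x, ENNReal.ofReal ((∑ k ∈ Finset.Ico m n, (f k x - a k)) ^ 2) ∂μ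
        ≤ ENNReal.ofReal (K * ∑ k ∈ Finset.Ico m n, φ k))
    (δ : ℝ) (hδ : 0 < δ) :
    ∀ᵐ x ∂μ, ∃ C > (0:ℝ), ∃ N₀ : ℕ, ∃ hN₀ : 1 ≤ N₀, ∀ N : ℕ, ∀ hN : N₀ ≤ N,
      |∑ k ∈ Finset.Icc 1 N, f k x - ∑ k ∈ Finset.Icc 1 N, a k|
        ≤ C * ((∑ k ∈ Finset.Icc 1 N, φ k) ^ ((1:ℝ)/2)
              * Real.log ((∑ k ∈ Finset.Icc 1 N, φ k) + 2) ^ (3/2 + δ)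
            + (Finset.Icc 1 N).sup' (Finset.nonempty_Icc.mpr (hN₀.trans hN)) a) := by
  classical
  have hφ0 : ∀ k, 0 ≤ φ k := fun k => (ha0 k).trans (haφ k)
  have htend : Filter.Tendsto (PS φ) Filter.atTop Filter.atTop := hΦ
  have h1 : ∀ i, 1 ≤ mIdx φ i := mIdx_one_le htend
  have hmono : ∀ ⦃i i' : ℕ⦄, i ≤ i' → mIdx φ i ≤ mIdx φ i' :=
    fun i i' h => mIdx_mono htend h
  have hzero : mIdx φ 0 = 1 := mIdx_zero htend hφ0
  set K' : ℝ := max K 0 with hK'def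
  have hK'0 : 0 ≤ K' := le_max_right _ _
  -- thresholds
  set c : ℕ → ℝ := fun j => (2:ℝ)^j * (j:ℝ) ^ ((2:ℝ) + 2*δ) with hcdef
  -- events for Borel–Cantelli
  set s : ℕ → Set X := fun n => {x | c (n+1) < Dj f a φ (n+1) x} with hsdef
  -- measure of events
  have hμs : ∀ n : ℕ, μ (s n) ≤ ENNReal.ofReal (K' / ((n+1:ℕ):ℝ) ^ ((1:ℝ) + 2*δ)) := by
    intro n
    set j : ℕ := n + 1 with hjdef
    have hj0 : (0:ℝ) < (j:ℝ) := by positivity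
    have hcpos : 0 < c j := mul_pos (by positivity) (Real.rpow_pos_of_pos hj0 _)
    have hsub : s n ⊆ {x | ENNReal.ofReal (c j) ≤ ENNReal.ofReal (Dj f a φ j x)} :=
      fun x hx => ENNReal.ofReal_le_ofReal (le_of_lt hx)
    calc μ (s n) ≤ μ {x | ENNReal.ofReal (c j) ≤ ENNReal.ofReal (Dj f a φ j x)} :=
          measure_mono hsub
      _ ≤ (∫⁻ x, ENNReal.ofReal (Dj f a φ j x) ∂μ) / ENNReal.ofReal (c j) :=
          meas_ge_le_lintegral_div (meas_Dj hmeas j).aemeasurable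
            (by simpa using hcpos) ENNReal.ofReal_ne_top
      _ ≤ ENNReal.ofReal (K' * j * 2^j) / ENNReal.ofReal (c j) := by
          gcongr
          exact lint_Dj htend hφ0 hvar hmeas j
      _ = ENNReal.ofReal (K' * j * 2^j / c j) := (ENNReal.ofReal_div_of_pos hcpos).symm
      _ = ENNReal.ofReal (K' / (j:ℝ) ^ ((1:ℝ) + 2*δ)) := by
          congr 1
          have e : (j:ℝ) ^ ((2:ℝ) + 2*δ) = (j:ℝ) ^ ((1:ℝ) + 2*δ) * (j:ℝ) := by
            rw [show (2:ℝ) + 2*δ = ((1:ℝ) + 2*δ) + 1 by ring,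
              Real.rpow_add hj0 ((1:ℝ) + 2*δ) 1, Real.rpow_one]
          have hB : (0:ℝ) < (j:ℝ) ^ ((1:ℝ) + 2*δ) := Real.rpow_pos_of_pos hj0 _
          have hA : (0:ℝ) < (2:ℝ)^j := by positivity
          rw [hcdef]
          simp only []
          rw [e]
          field_simp
  -- summability
  have hsummable : Summable (fun n : ℕ => K' / ((n+1:ℕ):ℝ) ^ ((1:ℝ) + 2*δ)) := by
    have hbase : Summable (fun n : ℕ => 1 / (n:ℝ) ^ ((1:ℝ) + 2*δ)) :=
      Real.summable_one_div_nat_rpow.2 (by linarith)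
    have hshift : Summable (fun n : ℕ => 1 / ((n+1:ℕ):ℝ) ^ ((1:ℝ) + 2*δ)) :=
      (summable_nat_add_iff 1).2 hbase
    have := hshift.mul_left K'
    simpa [mul_one_div, div_eq_mul_inv] using this
  have htsum : (∑' n, μ (s n)) ≠ ⊤ := by
    have hle : (∑' n, μ (s n)) ≤ ∑' n, ENNReal.ofReal (K' / ((n+1:ℕ):ℝ) ^ ((1:ℝ)+2*δ)) :=
      ENNReal.tsum_le_tsum hμs
    have heq : (∑' n, ENNReal.ofReal (K' / ((n+1:ℕ):ℝ) ^ ((1:ℝ)+2*δ)))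
        = ENNReal.ofReal (∑' n, K' / ((n+1:ℕ):ℝ) ^ ((1:ℝ)+2*δ)) :=
      (ENNReal.ofReal_tsum_of_nonneg (fun n => by positivity) hsummable).symm
    exact ((hle.trans_eq heq).trans_lt ENNReal.ofReal_lt_top).ne
  -- Borel–Cantelli
  have hBC := MeasureTheory.ae_finite_setOf_mem (μ := μ) htsum
  filter_upwards [hBC] with x hx
  obtain ⟨J, hJ⟩ := hx.bddAbove
  have hD : ∀ j : ℕ, J + 2 ≤ j → Dj f a φ j x ≤ c j := by
    intro j hj
    by_contra hcon
    push_neg at hcon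
    have hmem : (j - 1) ∈ {n | x ∈ s n} := by
      simp only [hsdef, Set.mem_setOf_eq]
      have : j - 1 + 1 = j := by omega
      rw [this]
      exact hcon
    have := hJ hmem
    omega
  -- key pointwise estimate
  set C₀ : ℝ := Real.sqrt 2 * (3:ℝ) ^ ((3:ℝ)/2 + δ) with hC₀def
  have hC₀pos : 0 < C₀ := mul_pos (Real.sqrt_pos.2 two_pos) (Real.rpow_pos_of_pos three_pos _)
  have hkey : ∀ i : ℕ, 2^(J+1) ≤ i →
      |Sd f a φ i x| ≤ C₀ * (i:ℝ) ^ ((1:ℝ)/2) * Real.log ((i:ℝ)+2) ^ ((3:ℝ)/2 + δ) := by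
    intro i hi
    set j : ℕ := Nat.size i with hjdef
    have hij : i < 2^j := Nat.lt_size_self i
    have hi1 : 1 ≤ i := le_trans Nat.one_le_two_pow hi
    have hjJ : J + 2 ≤ j := by
      by_contra hcon
      push_neg at hcon
      have : Nat.size i ≤ J + 1 := by omega
      have := Nat.size_le.1 this
      omega
    have hj1 : 1 ≤ j := by omega
    have hj0 : (0:ℝ) < (j:ℝ) := by positivity
    have hpow : 2^(j-1) ≤ i := by
      by_contra hcon
      push_neg at hcon
      have : Nat.size i ≤ j - 1 := Nat.size_le.2 hcon
      omega
    have h2j : (2:ℝ)^j ≤ 2 * (i:ℝ) := by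
      have : (2:ℕ)^j ≤ 2 * i := by
        calc (2:ℕ)^j = 2 * 2^(j-1) := by
              rw [← pow_succ']
              congr 1
              omega
          _ ≤ 2 * i := by omega
      exact_mod_cast this
    set L : ℝ := Real.log ((i:ℝ)+2) with hLdef
    have hL1 : 1 ≤ L := by
      rw [hLdef, Real.le_log_iff_exp_le (by positivity)]
      have hi1' : (1:ℝ) ≤ (i:ℝ) := by exact_mod_cast hi1
      calc Real.exp 1 ≤ 2.7182818286 := Real.exp_one_lt_d9.le
        _ ≤ (i:ℝ) + 2 := by linarith
    have hlog : (j:ℝ) ≤ 3 * L := by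
      have hlog2 : (0.6931471803:ℝ) < Real.log 2 := Real.log_two_gt_d9
      have hA : ((j:ℝ) - 1) * Real.log 2 ≤ L := by
        have hle : ((2:ℝ))^(j-1) ≤ (i:ℝ) := by exact_mod_cast hpow
        have h1' : Real.log ((2:ℝ)^(j-1)) ≤ Real.log ((i:ℝ)+2) := by
          apply Real.log_le_log (by positivity)
          have : (0:ℝ) ≤ 2 := by norm_num
          linarith
        rw [Real.log_pow] at h1'
        have hcast : (((j:ℕ) - 1 : ℕ):ℝ) = (j:ℝ) - 1 := by
          have : 1 ≤ j := hj1
          push_cast [this]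
          ring
        rw [hcast] at h1'
        exact h1'
      have hjr : (1:ℝ) ≤ (j:ℝ) := by exact_mod_cast hj1
      nlinarith [mul_le_mul_of_nonneg_right hlog2.le (by linarith : (0:ℝ) ≤ (j:ℝ) - 1)]
    -- combine
    have hchain := chain0 (f := f) (a := a) h1 hmono hzero x hij
    have hD' : Dj f a φ j x ≤ c j := hD j (by omega)
    have step1 : (j:ℝ) * Dj f a φ j x ≤ (2:ℝ)^j * (j:ℝ) ^ ((3:ℝ) + 2*δ) := by
      have e1 : (j:ℝ) * c j = (2:ℝ)^j * (j:ℝ) ^ ((3:ℝ) + 2*δ) := by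
        rw [hcdef]
        simp only []
        rw [show (3:ℝ) + 2*δ = ((2:ℝ) + 2*δ) + 1 by ring,
          Real.rpow_add hj0 ((2:ℝ) + 2*δ) 1, Real.rpow_one]
        ring
      calc (j:ℝ) * Dj f a φ j x ≤ (j:ℝ) * c j := by
            apply mul_le_mul_of_nonneg_left hD' (by positivity)
        _ = _ := e1
    have step2 : (2:ℝ)^j * (j:ℝ) ^ ((3:ℝ) + 2*δ) ≤ (2 * (i:ℝ)) * (3*L) ^ ((3:ℝ) + 2*δ) := by
      apply mul_le_mul h2j ?_ (Real.rpow_nonneg (by positivity) _) (by positivity)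
      exact Real.rpow_le_rpow (by positivity) hlog (by linarith)
    have step3 : |Sd f a φ i x| ≤ Real.sqrt ((2 * (i:ℝ)) * (3*L) ^ ((3:ℝ) + 2*δ)) :=
      hchain.trans (Real.sqrt_le_sqrt (step1.trans step2))
    have hLnn : (0:ℝ) ≤ 3*L := by linarith
    have e4 : Real.sqrt ((2 * (i:ℝ)) * (3*L) ^ ((3:ℝ) + 2*δ))
        = (Real.sqrt 2 * (i:ℝ) ^ ((1:ℝ)/2)) * ((3*L) ^ ((3:ℝ)/2 + δ)) := by
      rw [Real.sqrt_mul (by positivity), Real.sqrt_mul (by norm_num : (0:ℝ) ≤ 2),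
        Real.sqrt_eq_rpow (i:ℝ), Real.sqrt_eq_rpow ((3*L) ^ ((3:ℝ) + 2*δ)),
        ← Real.rpow_mul hLnn]
      ring_nf
    have e5 : (3*L) ^ ((3:ℝ)/2 + δ) = (3:ℝ) ^ ((3:ℝ)/2 + δ) * L ^ ((3:ℝ)/2 + δ) :=
      Real.mul_rpow (by norm_num) (by linarith)
    rw [e4, e5] at step3
    calc |Sd f a φ i x| ≤ _ := step3
      _ = C₀ * (i:ℝ) ^ ((1:ℝ)/2) * L ^ ((3:ℝ)/2 + δ) := by rw [hC₀def]; ring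
  -- choose N₀
  have hq : (0:ℝ) < (2:ℝ) ^ ((2:ℝ) + δ) := Real.rpow_pos_of_pos two_pos _
  set C : ℝ := C₀ * (1 + (2:ℝ) ^ ((2:ℝ) + δ)) + 1 with hCdef
  have hCpos : 0 < C := by positivity
  obtain ⟨N₁, hN₁⟩ := (htend.eventually_ge_atTop (((2^(J+1):ℕ):ℝ) + 1)).exists_forall_of_atTop
  refine ⟨C, hCpos, max N₁ 1, le_max_right _ _, ?_⟩
  intro N hN
  have hN1 : 1 ≤ N := le_trans (le_max_right _ _) hN
  set P : ℝ := PS φ N with hPdef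
  have hPR : ((2^(J+1):ℕ):ℝ) + 1 ≤ P := hN₁ N (le_trans (le_max_left _ _) hN)
  have hP1 : (1:ℝ) ≤ P := by
    have : (0:ℝ) ≤ ((2^(J+1):ℕ):ℝ) := by positivity
    linarith
  set i : ℕ := Nat.floor P with hidef
  have hPi : (i:ℝ) ≤ P := Nat.floor_le (by linarith)
  have hPi1 : P < (i:ℝ) + 1 := Nat.lt_floor_add_one P
  have hi2J : 2^(J+1) ≤ i := Nat.le_floor (by push_cast; push_cast at hPR; linarith)
  have hi2J' : 2^(J+1) ≤ i + 1 := le_trans hi2J (Nat.le_succ i)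
  have hi1 : 1 ≤ i := le_trans Nat.one_le_two_pow hi2J
  set m₁ : ℕ := mIdx φ i with hm₁def
  set m₂ : ℕ := mIdx φ (i+1) with hm₂def
  have hm₁1 : 1 ≤ m₁ := h1 i
  have hm₁N : m₁ ≤ N := mIdx_le hN1 hPi
  have hm₂N : N + 1 ≤ m₂ := by
    by_contra hcon
    push_neg at hcon
    have hspec := mIdx_spec htend (i+1)
    have hm₂N' : m₂ ≤ N := by omega
    have := PS_mono hφ0 hm₂N'
    have hcast : (((i:ℕ)+1 : ℕ):ℝ) = (i:ℝ) + 1 := by push_cast; ring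
    rw [hcast] at hspec
    have : PS φ m₂ ≤ P := this
    linarith
  have hm₁m₂ : m₁ < m₂ := lt_of_le_of_lt hm₁N (by omega)
  -- sandwich
  have hSdi : Sd f a φ i x = (∑ k ∈ Finset.Ico 1 m₁, f k x) - ∑ k ∈ Finset.Ico 1 m₁, a k := by
    rw [Sd, Finset.sum_sub_distrib]
  have hSdi1 : Sd f a φ (i+1) x
      = (∑ k ∈ Finset.Ico 1 m₂, f k x) - ∑ k ∈ Finset.Ico 1 m₂, a k := by
    rw [Sd, Finset.sum_sub_distrib]
  have hgap2 : ∑ k ∈ Finset.Ico (m₁+1) m₂, φ k ≤ 1 := by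
    have := sum_Ico_phi hφ0 (by omega : 1 ≤ m₁+1) (by omega : m₁+1 ≤ m₂)
    rw [this]
    have h1' := mIdx_pre htend (i+1)
    have h2' := mIdx_spec htend i
    have hcast : (((i:ℕ)+1 : ℕ):ℝ) = (i:ℝ) + 1 := by push_cast; ring
    rw [hcast] at h1'
    have e : m₁ + 1 - 1 = m₁ := by omega
    rw [e]
    have : PS φ (m₂ - 1) ≤ (i:ℝ) + 1 := h1'
    linarith [h2']
  have hgapN : ∑ k ∈ Finset.Ico (m₁+1) (N+1), φ k ≤ 1 := by
    have := sum_Ico_phi hφ0 (by omega : 1 ≤ m₁+1) (by omega : m₁+1 ≤ N+1)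
    rw [this]
    have h2' := mIdx_spec htend i
    have e : m₁ + 1 - 1 = m₁ := by omega
    have e2 : N + 1 - 1 = N := by omega
    rw [e, e2]
    have : PS φ N = P := rfl
    linarith [h2']
  have hupper : (∑ k ∈ Finset.Icc 1 N, f k x) - ∑ k ∈ Finset.Icc 1 N, a k
      ≤ Sd f a φ (i+1) x + (a m₁ + 1) := by
    rw [← Finset.Ico_add_one_right_eq_Icc]
    have hF : ∑ k ∈ Finset.Ico 1 (N+1), f k x ≤ ∑ k ∈ Finset.Ico 1 m₂, f k x :=
      Finset.sum_le_sum_of_subset_of_nonneg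
        (Finset.Ico_subset_Ico le_rfl hm₂N) (fun k _ _ => hnonneg k x)
    have hA : (∑ k ∈ Finset.Ico 1 m₂, a k) - ∑ k ∈ Finset.Ico 1 (N+1), a k ≤ a m₁ + 1 := by
      have hsplit : (∑ k ∈ Finset.Ico 1 (N+1), a k) + ∑ k ∈ Finset.Ico (N+1) m₂, a k
          = ∑ k ∈ Finset.Ico 1 m₂, a k :=
        Finset.sum_Ico_consecutive a (by omega) hm₂N
      have hsub : ∑ k ∈ Finset.Ico (N+1) m₂, a k ≤ ∑ k ∈ Finset.Ico m₁ m₂, a k :=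
        Finset.sum_le_sum_of_subset_of_nonneg
          (Finset.Ico_subset_Ico (by omega) le_rfl) (fun k _ _ => ha0 k)
      have hpeel : ∑ k ∈ Finset.Ico m₁ m₂, a k = a m₁ + ∑ k ∈ Finset.Ico (m₁+1) m₂, a k :=
        Finset.sum_eq_sum_Ico_succ_bot hm₁m₂ a
      have haφ' : ∑ k ∈ Finset.Ico (m₁+1) m₂, a k ≤ ∑ k ∈ Finset.Ico (m₁+1) m₂, φ k :=
        Finset.sum_le_sum fun k _ => haφ k
      linarith [hgap2]
    linarith [hSdi1, hF, hA]
  have hlower : Sd f a φ i x - (a m₁ + 1)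
      ≤ (∑ k ∈ Finset.Icc 1 N, f k x) - ∑ k ∈ Finset.Icc 1 N, a k := by
    rw [← Finset.Ico_add_one_right_eq_Icc]
    have hF : ∑ k ∈ Finset.Ico 1 m₁, f k x ≤ ∑ k ∈ Finset.Ico 1 (N+1), f k x :=
      Finset.sum_le_sum_of_subset_of_nonneg
        (Finset.Ico_subset_Ico le_rfl (by omega)) (fun k _ _ => hnonneg k x)
    have hA : (∑ k ∈ Finset.Ico 1 (N+1), a k) - ∑ k ∈ Finset.Ico 1 m₁, a k ≤ a m₁ + 1 := by
      have hsplit : (∑ k ∈ Finset.Ico 1 m₁, a k) + ∑ k ∈ Finset.Ico m₁ (N+1), a k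
          = ∑ k ∈ Finset.Ico 1 (N+1), a k :=
        Finset.sum_Ico_consecutive a (by omega) (by omega)
      have hpeel : ∑ k ∈ Finset.Ico m₁ (N+1), a k = a m₁ + ∑ k ∈ Finset.Ico (m₁+1) (N+1), a k :=
        Finset.sum_eq_sum_Ico_succ_bot (by omega) a
      have haφ' : ∑ k ∈ Finset.Ico (m₁+1) (N+1), a k ≤ ∑ k ∈ Finset.Ico (m₁+1) (N+1), φ k :=
        Finset.sum_le_sum fun k _ => haφ k
      linarith [hgapN]
    linarith [hSdi, hF, hA]
  -- bounds on the two Sd terms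
  set L : ℝ := Real.log (P + 2) with hLdef
  have hL1 : 1 ≤ L := by
    rw [hLdef, Real.le_log_iff_exp_le (by linarith)]
    calc Real.exp 1 ≤ 2.7182818286 := Real.exp_one_lt_d9.le
      _ ≤ P + 2 := by linarith
  set G : ℝ := P ^ ((1:ℝ)/2) * L ^ ((3:ℝ)/2 + δ) with hGdef
  have hPp : (0:ℝ) < P := by linarith
  have hG1 : 1 ≤ G := by
    have h1' : (1:ℝ) ≤ P ^ ((1:ℝ)/2) := by
      calc (1:ℝ) = (1:ℝ) ^ ((1:ℝ)/2) := (Real.one_rpow _).symm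
        _ ≤ P ^ ((1:ℝ)/2) := Real.rpow_le_rpow (by norm_num) hP1 (by norm_num)
    have h2' : (1:ℝ) ≤ L ^ ((3:ℝ)/2 + δ) := by
      calc (1:ℝ) = (1:ℝ) ^ ((3:ℝ)/2 + δ) := (Real.one_rpow _).symm
        _ ≤ L ^ ((3:ℝ)/2 + δ) := Real.rpow_le_rpow (by norm_num) hL1 (by linarith)
    nlinarith
  have hbound1 : |Sd f a φ i x| ≤ C₀ * G := by
    have := hkey i hi2J
    have hmono1 : (i:ℝ) ^ ((1:ℝ)/2) ≤ P ^ ((1:ℝ)/2) :=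
      Real.rpow_le_rpow (by positivity) hPi (by norm_num)
    have hmono2 : Real.log ((i:ℝ)+2) ^ ((3:ℝ)/2 + δ) ≤ L ^ ((3:ℝ)/2 + δ) := by
      apply Real.rpow_le_rpow (Real.log_nonneg (by push_cast; linarith)) ?_ (by linarith)
      rw [hLdef]
      apply Real.log_le_log (by positivity)
      linarith
    calc |Sd f a φ i x| ≤ C₀ * (i:ℝ) ^ ((1:ℝ)/2) * Real.log ((i:ℝ)+2) ^ ((3:ℝ)/2 + δ) := this
      _ ≤ C₀ * P ^ ((1:ℝ)/2) * L ^ ((3:ℝ)/2 + δ) := by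
          apply mul_le_mul ?_ hmono2 (Real.rpow_nonneg (Real.log_nonneg (by push_cast; linarith)) _) (by positivity)
          exact mul_le_mul_of_nonneg_left hmono1 hC₀pos.le
      _ = C₀ * G := by rw [hGdef]; ring
  have hbound2 : |Sd f a φ (i+1) x| ≤ C₀ * (2:ℝ) ^ ((2:ℝ) + δ) * G := by
    have hk := hkey (i+1) hi2J'
    have hcast : (((i:ℕ)+1 : ℕ):ℝ) = (i:ℝ) + 1 := by push_cast; ring
    rw [hcast] at hk
    have h2P : (i:ℝ) + 1 ≤ 2 * P := by linarith
    have hmono1 : ((i:ℝ)+1) ^ ((1:ℝ)/2) ≤ (2:ℝ) ^ ((1:ℝ)/2) * P ^ ((1:ℝ)/2) := by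
      calc ((i:ℝ)+1) ^ ((1:ℝ)/2) ≤ (2*P) ^ ((1:ℝ)/2) :=
            Real.rpow_le_rpow (by positivity) h2P (by norm_num)
        _ = (2:ℝ) ^ ((1:ℝ)/2) * P ^ ((1:ℝ)/2) := Real.mul_rpow (by norm_num) (by linarith)
    have hlog3 : Real.log ((i:ℝ)+1+2) ≤ 2 * L := by
      have hsq : (i:ℝ)+1+2 ≤ (P+2)^2 := by nlinarith
      calc Real.log ((i:ℝ)+1+2) ≤ Real.log ((P+2)^2) := by
            apply Real.log_le_log (by positivity) hsq
        _ = 2 * L := by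
            rw [hLdef, Real.log_pow]
            norm_num
    have hmono2 : Real.log ((i:ℝ)+1+2) ^ ((3:ℝ)/2 + δ) ≤ (2:ℝ) ^ ((3:ℝ)/2+δ) * L ^ ((3:ℝ)/2 + δ) := by
      calc Real.log ((i:ℝ)+1+2) ^ ((3:ℝ)/2 + δ) ≤ (2*L) ^ ((3:ℝ)/2 + δ) := by
            apply Real.rpow_le_rpow (Real.log_nonneg (by push_cast; linarith)) hlog3 (by linarith)
        _ = (2:ℝ) ^ ((3:ℝ)/2+δ) * L ^ ((3:ℝ)/2 + δ) := Real.mul_rpow (by norm_num) (by linarith)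
    have hLnn : (0:ℝ) ≤ L ^ ((3:ℝ)/2 + δ) := Real.rpow_nonneg (by linarith) _
    have hfinal : C₀ * ((i:ℝ)+1) ^ ((1:ℝ)/2) * Real.log ((i:ℝ)+1+2) ^ ((3:ℝ)/2 + δ)
        ≤ C₀ * ((2:ℝ) ^ ((1:ℝ)/2) * P ^ ((1:ℝ)/2)) * ((2:ℝ) ^ ((3:ℝ)/2+δ) * L ^ ((3:ℝ)/2 + δ)) := by
      apply mul_le_mul ?_ hmono2 (Real.rpow_nonneg (Real.log_nonneg (by push_cast; linarith)) _) (by positivity)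
      exact mul_le_mul_of_nonneg_left hmono1 hC₀pos.le
    have e2 : (2:ℝ) ^ ((1:ℝ)/2) * (2:ℝ) ^ ((3:ℝ)/2+δ) = (2:ℝ) ^ ((2:ℝ) + δ) := by
      rw [← Real.rpow_add two_pos]
      congr 1
      ring
    calc |Sd f a φ (i+1) x| ≤ _ := hk
      _ ≤ _ := hfinal
      _ = C₀ * (2:ℝ) ^ ((2:ℝ) + δ) * G := by
          rw [hGdef, ← e2]; ring
  -- the sup' term
  have hmem₁ : m₁ ∈ Finset.Icc 1 N := Finset.mem_Icc.mpr ⟨hm₁1, hm₁N⟩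
  have hmem1 : (1:ℕ) ∈ Finset.Icc 1 N := Finset.mem_Icc.mpr ⟨le_rfl, hN1⟩
  have hsup : a m₁ ≤ (Finset.Icc 1 N).sup'
      (Finset.nonempty_Icc.mpr (le_trans (le_max_right N₁ 1) hN)) a :=
    Finset.le_sup' a hmem₁
  have hsup0 : 0 ≤ (Finset.Icc 1 N).sup'
      (Finset.nonempty_Icc.mpr (le_trans (le_max_right N₁ 1) hN)) a :=
    le_trans (ha0 1) (Finset.le_sup' a hmem1)
  set M : ℝ := (Finset.Icc 1 N).sup'
      (Finset.nonempty_Icc.mpr (le_trans (le_max_right N₁ 1) hN)) a with hMdef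
  -- final combination
  have habs : |(∑ k ∈ Finset.Icc 1 N, f k x) - ∑ k ∈ Finset.Icc 1 N, a k|
      ≤ |Sd f a φ i x| + |Sd f a φ (i+1) x| + (a m₁ + 1) := by
    rw [abs_le]
    constructor
    · have := neg_abs_le (Sd f a φ i x)
      have h0 : (0:ℝ) ≤ |Sd f a φ (i+1) x| := abs_nonneg _
      linarith [hlower]
    · have := le_abs_self (Sd f a φ (i+1) x)
      have h0 : (0:ℝ) ≤ |Sd f a φ i x| := abs_nonneg _
      linarith [hupper]
  show _ ≤ C * (P ^ ((1:ℝ)/2) * Real.log (P + 2) ^ (3/2 + δ) + M)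
  have hgoalG : P ^ ((1:ℝ)/2) * Real.log (P + 2) ^ (3/2 + δ) = G := by
    rw [hGdef, hLdef]
  rw [hgoalG]
  have hq0 : (0:ℝ) ≤ C₀ * (2:ℝ) ^ ((2:ℝ)+δ) := by positivity
  calc |(∑ k ∈ Finset.Icc 1 N, f k x) - ∑ k ∈ Finset.Icc 1 N, a k|
      ≤ |Sd f a φ i x| + |Sd f a φ (i+1) x| + (a m₁ + 1) := habs
    _ ≤ C₀ * G + C₀ * (2:ℝ) ^ ((2:ℝ)+δ) * G + (M + G) := by
        linarith [hbound1, hbound2, hsup]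
    _ ≤ C * (G + M) := by
        rw [hCdef]
        nlinarith [hG1, hsup0, hC₀pos, hq]
end

section
/- Let ψ : ℕ → [0,1/2] be any function and γ ∈ ℝ arbitrary. If q, r ∈ ℤ²∖{0} are not parallel, then λ₂(A_q ∩ A_r) = λ₂(A_q)·λ₂(A_r). -/
open MeasureTheory Function

/-- The approximation set `A_q ⊆ 𝕋²` for a nonzero integer vector `q`:
`A_q = {α : ‖q₁α₁ + q₂α₂ - γ‖ ≤ ψ(|q|)}`, `|q| = max(|q₁|,|q₂|)`. -/
noncomputable def ApproxSet (ψ : ℕ → ℝ) (γ : ℝ) (v : ℤ × ℤ) :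
    Set (UnitAddCircle × UnitAddCircle) :=
  {α | ‖v.1 • α.1 + v.2 • α.2 - (γ : UnitAddCircle)‖ ≤ ψ (max v.1.natAbs v.2.natAbs)}

/-- Nonzero integer vectors `q, r` are parallel if `a•q = b•r` for some
integers `a, b` not both zero. -/
def IsParallel (q r : ℤ × ℤ) : Prop :=
  ∃ a b : ℤ, ¬(a = 0 ∧ b = 0) ∧ a • q = b • r

noncomputable section AuxIndep

instance : IsProbabilityMeasure (volume : Measure UnitAddCircle) :=
  ⟨by simp [AddCircle.measure_univ]⟩

instance : Measure.IsAddHaarMeasure (volume : Measure (UnitAddCircle × UnitAddCircle)) :=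
  inferInstanceAs (Measure.IsAddHaarMeasure ((volume : Measure UnitAddCircle).prod volume))

lemma map_volume_eq {G H : Type*} [AddGroup G] [TopologicalSpace G] [IsTopologicalAddGroup G]
    [MeasureSpace G] [BorelSpace G] [IsProbabilityMeasure (volume : Measure G)]
    [AddGroup H] [TopologicalSpace H] [IsTopologicalAddGroup H] [LocallyCompactSpace H]
    [MeasureSpace H] [BorelSpace H] [IsProbabilityMeasure (volume : Measure H)]
    [Measure.IsAddHaarMeasure (volume : Measure H)]
    [Measure.IsAddHaarMeasure (volume : Measure G)]
    (f : G →+ H) (hf : Continuous f) (hs : Surjective f) :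
    Measure.map f volume = volume := by
  haveI := Measure.isAddHaarMeasure_map_of_isFiniteMeasure (volume : Measure G) f hf hs
  haveI : IsProbabilityMeasure (Measure.map f (volume : Measure G)) :=
    Measure.isProbabilityMeasure_map hf.measurable.aemeasurable
  exact Measure.isAddHaarMeasure_eq_of_isProbabilityMeasure _ _

/-- The linear form `(x,y) ↦ a•x + b•y` as an `AddMonoidHom`. -/
def linForm (a b : ℤ) : UnitAddCircle × UnitAddCircle →+ UnitAddCircle where
  toFun x := a • x.1 + b • x.2
  map_zero' := by simp
  map_add' x y := by simp only [Prod.fst_add, Prod.snd_add, smul_add]; abel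

lemma continuous_linForm (a b : ℤ) : Continuous (linForm a b) :=
  ((continuous_zsmul a).comp continuous_fst).add ((continuous_zsmul b).comp continuous_snd)

lemma surjective_linForm {a b : ℤ} (h : ¬(a = 0 ∧ b = 0)) : Surjective (linForm a b) := by
  intro y
  rcases Decidable.em (a = 0) with ha | ha
  · refine ⟨(0, DivisibleBy.div y b), ?_⟩
    have hb : b ≠ 0 := fun hb => h ⟨ha, hb⟩
    simp [linForm, ha, DivisibleBy.div_cancel y hb]
  · refine ⟨(DivisibleBy.div y a, 0), ?_⟩
    simp [linForm, DivisibleBy.div_cancel y ha]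

lemma surjective_pair {q r : ℤ × ℤ} (hd : q.1 * r.2 - q.2 * r.1 ≠ 0) :
    Surjective ((linForm q.1 q.2).prod (linForm r.1 r.2)) := by
  intro y
  set d : ℤ := q.1 * r.2 - q.2 * r.1 with hdd
  set z₁ := DivisibleBy.div y.1 d
  set z₂ := DivisibleBy.div y.2 d
  refine ⟨(r.2 • z₁ - q.2 • z₂, -(r.1 • z₁) + q.1 • z₂), ?_⟩
  have h1 : d • z₁ = y.1 := DivisibleBy.div_cancel y.1 hd
  have h2 : d • z₂ = y.2 := DivisibleBy.div_cancel y.2 hd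
  have e1 : q.1 • (r.2 • z₁ - q.2 • z₂) + q.2 • (-(r.1 • z₁) + q.1 • z₂) = d • z₁ := by
    simp only [smul_sub, smul_add, smul_neg, smul_smul, hdd, sub_smul]
    rw [mul_comm q.2 q.1]
    abel
  have e2 : r.1 • (r.2 • z₁ - q.2 • z₂) + r.2 • (-(r.1 • z₁) + q.1 • z₂) = d • z₂ := by
    simp only [smul_sub, smul_add, smul_neg, smul_smul, hdd, sub_smul]
    rw [mul_comm r.2 r.1, mul_comm r.2 q.1, mul_comm r.1 q.2]
    abel
  ext
  · simpa [AddMonoidHom.prod, linForm] using e1.trans h1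
  · simpa [AddMonoidHom.prod, linForm] using e2.trans h2

end AuxIndep

/-- For non-parallel vectors, the sets `A_q` and `A_r` are independent. -/
theorem nonparallel_independent (ψ : ℕ → ℝ) (hψ0 : ∀ n, 0 ≤ ψ n)
    (hψ2 : ∀ n, ψ n ≤ 1/2) (γ : ℝ)
    (q r : ℤ × ℤ) (hq : q ≠ 0) (hr : r ≠ 0) (h : ¬ IsParallel q r) :
    volume (ApproxSet ψ γ q ∩ ApproxSet ψ γ r)
      = volume (ApproxSet ψ γ q) * volume (ApproxSet ψ γ r) := by
  classical
  -- determinant is nonzero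
  have hq' : ¬(q.1 = 0 ∧ q.2 = 0) := by
    intro ⟨h1, h2⟩; exact hq (Prod.ext h1 h2)
  have hr' : ¬(r.1 = 0 ∧ r.2 = 0) := by
    intro ⟨h1, h2⟩; exact hr (Prod.ext h1 h2)
  have hd : q.1 * r.2 - q.2 * r.1 ≠ 0 := by
    intro hd0
    apply h
    have hd0' : q.1 * r.2 = q.2 * r.1 := by linarith
    rcases Decidable.em (q.1 = 0) with h1 | h1
    · have h2 : q.2 ≠ 0 := fun h2 => hq' ⟨h1, h2⟩
      refine ⟨r.2, q.2, fun hh => h2 hh.2, ?_⟩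
      have : r.2 * q.1 = q.2 * r.1 := by rw [mul_comm]; exact hd0'
      exact Prod.ext (by simpa [Prod.smul_def, smul_eq_mul] using this)
        (by simp [Prod.smul_def, smul_eq_mul, mul_comm])
    · refine ⟨r.1, q.1, fun hh => h1 hh.2, ?_⟩
      have : r.1 * q.2 = q.1 * r.2 := by rw [mul_comm]; exact hd0'.symm
      exact Prod.ext (by simp [Prod.smul_def, smul_eq_mul, mul_comm])
        (by simpa [Prod.smul_def, smul_eq_mul] using this)
  -- target sets
  set E : Set UnitAddCircle :=
    {x | ‖x - (γ : UnitAddCircle)‖ ≤ ψ (max q.1.natAbs q.2.natAbs)} with hE_def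
  set F : Set UnitAddCircle :=
    {x | ‖x - (γ : UnitAddCircle)‖ ≤ ψ (max r.1.natAbs r.2.natAbs)} with hF_def
  have hEc : IsClosed E := isClosed_le (by fun_prop) continuous_const
  have hFc : IsClosed F := isClosed_le (by fun_prop) continuous_const
  have hE : MeasurableSet E := hEc.measurableSet
  have hF : MeasurableSet F := hFc.measurableSet
  have hAq : ApproxSet ψ γ q = (linForm q.1 q.2) ⁻¹' E := rfl
  have hAr : ApproxSet ψ γ r = (linForm r.1 r.2) ⁻¹' F := rfl
  set Φ := (linForm q.1 q.2).prod (linForm r.1 r.2) with hΦ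
  have hΦc : Continuous Φ := (continuous_linForm _ _).prodMk (continuous_linForm _ _)
  have hint : ApproxSet ψ γ q ∩ ApproxSet ψ γ r = Φ ⁻¹' (E ×ˢ F) := rfl
  have hmapΦ : Measure.map Φ volume = volume := map_volume_eq Φ hΦc (surjective_pair hd)
  have hmapq : Measure.map (linForm q.1 q.2) volume = volume :=
    map_volume_eq _ (continuous_linForm _ _) (surjective_linForm hq')
  have hmapr : Measure.map (linForm r.1 r.2) volume = volume :=
    map_volume_eq _ (continuous_linForm _ _) (surjective_linForm hr')
  calc volume (ApproxSet ψ γ q ∩ ApproxSet ψ γ r)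
      = volume (Φ ⁻¹' (E ×ˢ F)) := by rw [hint]
    _ = Measure.map Φ volume (E ×ˢ F) :=
        (Measure.map_apply hΦc.measurable (hE.prod hF)).symm
    _ = volume (E ×ˢ F) := by rw [hmapΦ]
    _ = volume E * volume F := by
        rw [Measure.volume_eq_prod, Measure.prod_prod]
    _ = volume (ApproxSet ψ γ q) * volume (ApproxSet ψ γ r) := by
        have vq : volume ((linForm q.1 q.2) ⁻¹' E) = volume E := by
          rw [← Measure.map_apply (continuous_linForm _ _).measurable hE, hmapq]
        have vr : volume ((linForm r.1 r.2) ⁻¹' F) = volume F := by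
          rw [← Measure.map_apply (continuous_linForm _ _).measurable hF, hmapr]
        rw [hAq, hAr, vq, vr]
end
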